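/- Let P be a finite poset of quasi-rank d+1 with least element 0̂ and largest element 1̂. Then the chain polynomial satisfies c_P(t) = c_{τ(P)}(t) + t · Σ_{h : ρ(h) = d} c_{⟨h⟩}(t), where τ(P) is P with all elements of quasi-rank d removed, and ⟨h⟩ = {z ∈ P : z ≤ h}. -/

import Mathlib

open scoped Classical

/-- The chain polynomial of a finite poset: `c_P(t) = Σ_k c_k(P) t^k`, where `c_k(P)`
is the number of `k`-element chains of `P`. -/
noncomputable def chainPoly (P : Type*) [Fintype P] [PartialOrder P] : Polynomial ℝ :=
  ∑ s ∈ Finset.univ.filter (fun s : Finset P => IsChain (· ≤ ·) (↑s : Set P)),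
    Polynomial.X ^ s.card

/-- The set of chain lengths from `⊥` to `x`: `n` belongs to it iff there is a chain
`⊥ = x₀ < x₁ < ⋯ < x_n = x`. -/
def chainLengthsTo {P : Type*} [PartialOrder P] [OrderBot P] (x : P) : Set ℕ :=
  {n | ∃ l : List P, l.Chain' (· < ·) ∧ l.head? = some ⊥ ∧ l.getLast? = some x ∧
    l.length = n + 1}

lemma rho_lt_aux {P : Type*} [PartialOrder P] [OrderBot P]
    (ρ : P → ℕ) (hρ : ∀ x : P, IsGreatest (chainLengthsTo x) (ρ x))
    {x y : P} (hxy : x < y) : ρ x < ρ y := by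
  obtain ⟨l, hl, hh, hlast, hlen⟩ := (hρ x).1
  have : ρ x + 1 ∈ chainLengthsTo y := by
    refine ⟨l ++ [y], ?_, ?_, ?_, ?_⟩
    · unfold List.Chain'; rw [List.isChain_append]
      refine ⟨hl, List.isChain_singleton y, ?_⟩
      intro a ha b hb
      simp only [List.head?_cons, Option.mem_def, Option.some.injEq] at hb
      rw [hlast] at ha
      simp only [Option.mem_def, Option.some.injEq] at ha
      subst ha; subst hb; exact hxy
    · rw [List.head?_append, hh]; rfl
    · exact List.getLast?_concat
    · simp [hlen]
  have := (hρ y).2 this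
  omega

/-- The chain polynomial of a subtype as a sum over chains of `P`. -/
lemma chainPoly_subtype {P : Type*} [Fintype P] [PartialOrder P] (p : P → Prop)
    [Fintype {x : P // p x}] :
    chainPoly {x : P // p x} =
      ∑ s ∈ Finset.univ.filter (fun s : Finset P =>
          IsChain (· ≤ ·) (↑s : Set P) ∧ ∀ x ∈ s, p x),
        Polynomial.X ^ s.card := by
  classical
  unfold chainPoly
  refine Finset.sum_nbij' (i := fun c => c.map (Function.Embedding.subtype p))
    (j := fun s => s.subtype p) ?_ ?_ ?_ ?_ ?_
  · intro c hc
    simp only [Finset.mem_filter, Finset.mem_univ, true_and] at hc ⊢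
    constructor
    · have : ((c.map (Function.Embedding.subtype p) : Finset P) : Set P)
          = (Subtype.val : {x : P // p x} → P) '' (↑c : Set {x : P // p x}) := by
        ext x
        simp [Function.Embedding.coe_subtype]
      rw [this]
      exact IsChain.image_of_map_rel (α := {x : P // p x}) (β := P) (· ≤ ·) (· ≤ ·) Subtype.val
        (fun x y h => Subtype.coe_le_coe.mpr h) hc
    · intro x hx
      simp only [Finset.mem_map, Function.Embedding.coe_subtype] at hx
      obtain ⟨x', _, rfl⟩ := hx
      exact x'.2
  · intro s hs
    simp only [Finset.mem_filter, Finset.mem_univ, true_and] at hs ⊢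
    intro a ha b hb hab
    simp only [Finset.mem_coe, Finset.mem_subtype] at ha hb
    rcases hs.1.total (Finset.mem_coe.mpr ha) (Finset.mem_coe.mpr hb) with h | h
    · exact Or.inl h
    · exact Or.inr h
  · intro c _
    ext a
    simp only [Finset.mem_subtype, Finset.mem_map, Function.Embedding.coe_subtype]
    constructor
    · rintro ⟨b, hb, he⟩
      rwa [← Subtype.ext he]
    · intro ha
      exact ⟨a, ha, rfl⟩
  · intro s hs
    simp only [Finset.mem_filter, Finset.mem_univ, true_and] at hs
    rw [Finset.subtype_map, Finset.filter_true_of_mem hs.2]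
  · intro c _
    rw [Finset.card_map]

theorem stmt8 {P : Type*} [Fintype P] [PartialOrder P] [BoundedOrder P]
    (ρ : P → ℕ) (hρ : ∀ x : P, IsGreatest (chainLengthsTo x) (ρ x))
    (d : ℕ) (hd : ρ ⊤ = d + 1) :
    chainPoly P = chainPoly {x : P // ρ x ≠ d} +
      Polynomial.X *
        ∑ h ∈ Finset.univ.filter (fun h : P => ρ h = d), chainPoly {z : P // z ≤ h} := by
  classical
  have hsm : ∀ {x y : P}, x < y → ρ x < ρ y := fun h => rho_lt_aux ρ hρ h
  have htop_le : ∀ x : P, x ≠ ⊤ → ρ x ≤ d := by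
    intro x hx
    have := hsm (lt_of_le_of_ne le_top hx)
    omega
  have hne_top : ∀ {h : P}, ρ h = d → h ≠ ⊤ := by
    intro h hh e; rw [e, hd] at hh; omega
  have hgt : ∀ {h z : P}, ρ h = d → h < z → z = ⊤ := by
    intro h z hh hz
    by_contra hne
    have h1 := hsm hz
    have h2 := htop_le z hne
    omega
  have htop_not_le : ∀ {h : P}, ρ h = d → ¬ (⊤ : P) ≤ h := by
    intro h hh hle
    exact hne_top hh (le_antisymm le_top hle)
  -- the key per-h identity
  have key : ∀ h : P, ρ h = d →
      ∑ s ∈ Finset.univ.filter (fun s : Finset P =>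
          IsChain (· ≤ ·) (↑s : Set P) ∧ h ∈ s), Polynomial.X ^ s.card
        = Polynomial.X * chainPoly {z : P // z ≤ h} := by
    intro h hh
    rw [chainPoly_subtype (fun z => z ≤ h), Finset.mul_sum]
    have hXp : ∀ n : ℕ, Polynomial.X * (Polynomial.X : Polynomial ℝ) ^ n =
        Polynomial.X ^ (n + 1) := fun n => (pow_succ' _ _).symm
    refine Finset.sum_nbij'
      (i := fun s => if (⊤ : P) ∈ s then s.erase ⊤ else s.erase h)
      (j := fun c => if h ∈ c then insert (⊤ : P) c else insert h c) ?_ ?_ ?_ ?_ ?_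
    · -- erase maps chains containing h to chains below h
      intro s hs
      simp only [Finset.mem_filter, Finset.mem_univ, true_and] at hs ⊢
      obtain ⟨hchain, hmem⟩ := hs
      have below : ∀ a : P, ∀ x ∈ s.erase a, x ≠ (⊤ : P) ∨ (⊤ : P) ∉ s → x ≤ h := by
        intro a x hx hxt
        have hxs : x ∈ s := Finset.mem_of_mem_erase hx
        rcases hchain.total (Finset.mem_coe.mpr hxs) (Finset.mem_coe.mpr hmem) with
          hle | hge
        · exact hle
        · by_cases hxh : x = h
          · exact le_of_eq hxh
          · exfalso
            have : x = ⊤ := hgt hh (lt_of_le_of_ne hge (Ne.symm hxh))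
            rcases hxt with h1 | h1
            · exact h1 this
            · exact h1 (this ▸ hxs)
      by_cases ht : (⊤ : P) ∈ s
      · simp only [ht, if_true]
        refine ⟨IsChain.mono (by exact_mod_cast Finset.erase_subset _ _) hchain, ?_⟩
        intro x hx
        exact below ⊤ x hx (Or.inl (Finset.ne_of_mem_erase hx))
      · simp only [ht, if_false]
        refine ⟨IsChain.mono (by exact_mod_cast Finset.erase_subset _ _) hchain, ?_⟩
        intro x hx
        exact below h x hx (Or.inr ht)
    · -- insert maps chains below h to chains containing h
      intro c hc
      simp only [Finset.mem_filter, Finset.mem_univ, true_and] at hc ⊢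
      obtain ⟨hchain, hle⟩ := hc
      by_cases hhc : h ∈ c
      · simp only [hhc, if_true]
        constructor
        · rw [Finset.coe_insert]
          exact hchain.insert (fun b _ _ => Or.inr le_top)
        · exact Finset.mem_insert_of_mem hhc
      · simp only [hhc, if_false]
        constructor
        · rw [Finset.coe_insert]
          exact hchain.insert (fun b hb _ => Or.inr (hle b hb))
        · exact Finset.mem_insert_self _ _
    · -- j ∘ i = id
      intro s hs
      simp only [Finset.mem_filter, Finset.mem_univ, true_and] at hs
      obtain ⟨hchain, hmem⟩ := hs
      by_cases ht : (⊤ : P) ∈ s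
      · have hh' : h ∈ s.erase ⊤ :=
          Finset.mem_erase.mpr ⟨hne_top hh, hmem⟩
        simp only [ht, if_true, hh', Finset.insert_erase ht]
      · have hh' : h ∉ s.erase h := Finset.notMem_erase _ _
        simp only [ht, if_false, hh', Finset.insert_erase hmem]
    · -- i ∘ j = id
      intro c hc
      simp only [Finset.mem_filter, Finset.mem_univ, true_and] at hc
      obtain ⟨hchain, hle⟩ := hc
      have htc : (⊤ : P) ∉ c := fun hx => htop_not_le hh (hle _ hx)
      by_cases hhc : h ∈ c
      · have ht' : (⊤ : P) ∈ insert (⊤ : P) c := Finset.mem_insert_self _ _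
        simp only [hhc, if_true, ht', Finset.erase_insert htc]
      · have ht' : (⊤ : P) ∉ insert h c := by
          simp only [Finset.mem_insert]
          push_neg
          exact ⟨fun e => hne_top hh e.symm, htc⟩
        simp only [hhc, if_false, ht', Finset.erase_insert hhc]
    · -- cardinalities
      intro s hs
      simp only [Finset.mem_filter, Finset.mem_univ, true_and] at hs
      obtain ⟨hchain, hmem⟩ := hs
      have hpos : 1 ≤ s.card := Finset.card_pos.mpr ⟨h, hmem⟩
      by_cases ht : (⊤ : P) ∈ s
      · simp only [ht, if_true, hXp, Finset.card_erase_of_mem ht]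
        congr 1
        omega
      · simp only [ht, if_false, hXp, Finset.card_erase_of_mem hmem]
        congr 1
        omega
  -- disjointness of the biUnion decomposition
  have hdisj : ((Finset.univ.filter (fun h : P => ρ h = d) : Finset P) : Set P).PairwiseDisjoint
      (fun h => Finset.univ.filter (fun s : Finset P =>
        IsChain (· ≤ ·) (↑s : Set P) ∧ h ∈ s)) := by
    intro h1 h1m h2 h2m hne
    simp only [Finset.coe_filter, Set.mem_setOf_eq, Finset.mem_univ, true_and] at h1m h2m
    refine Finset.disjoint_left.mpr ?_
    intro s hs1 hs2
    simp only [Finset.mem_filter, Finset.mem_univ, true_and] at hs1 hs2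
    obtain ⟨hchain, hm1⟩ := hs1
    obtain ⟨_, hm2⟩ := hs2
    rcases hchain.total (Finset.mem_coe.mpr hm1) (Finset.mem_coe.mpr hm2) with hle | hge
    · have := hsm (lt_of_le_of_ne hle hne)
      omega
    · have := hsm (lt_of_le_of_ne hge (Ne.symm hne))
      omega
  have hbi : (Finset.univ.filter (fun s : Finset P =>
        IsChain (· ≤ ·) (↑s : Set P) ∧ ¬ ∀ x ∈ s, ρ x ≠ d))
      = (Finset.univ.filter (fun h : P => ρ h = d)).biUnion
          (fun h => Finset.univ.filter (fun s : Finset P =>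
            IsChain (· ≤ ·) (↑s : Set P) ∧ h ∈ s)) := by
    ext s
    simp only [Finset.mem_filter, Finset.mem_biUnion, Finset.mem_univ, true_and]
    push_neg
    constructor
    · rintro ⟨hchain, x, hx, hxd⟩
      exact ⟨x, hxd, hchain, hx⟩
    · rintro ⟨x, hxd, hchain, hx⟩
      exact ⟨hchain, x, hx, hxd⟩
  have hsum2 : Polynomial.X *
      ∑ h ∈ Finset.univ.filter (fun h : P => ρ h = d), chainPoly {z : P // z ≤ h}
      = ∑ s ∈ Finset.univ.filter (fun s : Finset P =>
          IsChain (· ≤ ·) (↑s : Set P) ∧ ¬ ∀ x ∈ s, ρ x ≠ d),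
        Polynomial.X ^ s.card := by
    rw [Finset.mul_sum, hbi, Finset.sum_biUnion hdisj]
    exact Finset.sum_congr rfl (fun h hm => (key h (by simpa using hm)).symm)
  rw [chainPoly_subtype (fun x => ρ x ≠ d), hsum2]
  unfold chainPoly
  rw [← Finset.sum_filter_add_sum_filter_not
      (Finset.univ.filter (fun s : Finset P => IsChain (· ≤ ·) (↑s : Set P)))
      (fun s => ∀ x ∈ s, ρ x ≠ d)]
  congr 1
  · rw [Finset.filter_filter]
    exact Finset.sum_congr (by ext s; simp [Finset.mem_filter]) (fun _ _ => rfl)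
  · rw [Finset.filter_filter]
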